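/- Suppose 0 < r < c/(2‖T‖³‖A₁‖). Then for all u, v ∈ (ker T)⊥ with ‖u‖ ≤ r and ‖v‖ ≤ r, and all h_u, h_v ∈ (ker T)⊥ satisfying G h_u = l̄ − G₁(u) and G h_v = l̄ − G₁(v), one has ‖h_u − h_v‖ ≤ L·‖u − v‖, where L := 2 r ‖T‖³ ‖A₁‖ / c < 1. In other words, the map 𝐇(v) := (G|_{Ran G})⁻¹(l̄ − G₁(v)), restricted to the ball 𝐁_r = {u ∈ Ran G : ‖u‖ ≤ r}, is a contraction with Lipschitz constant L. -/

import Mathlib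

open scoped RealInnerProductSpace

/-- The discrete fixed point map `𝐇(v) = (G|_{Ran G})⁻¹(l̄ − G₁(v))` restricted to the
ball of radius `r < c/(2‖T‖³‖A₁‖)` in `Ran G = (ker T)ᗮ` is a contraction with
Lipschitz constant `L = 2r‖T‖³‖A₁‖/c < 1`. -/
theorem discrete_fixed_point_map_contraction
    {V H : Type*} [NormedAddCommGroup V] [InnerProductSpace ℝ V] [CompleteSpace V]
    [NormedAddCommGroup H] [InnerProductSpace ℝ H] [CompleteSpace H]
    (B : V →L[ℝ] V) (α : ℝ) (hα : 0 < α)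
    (hB : ∀ v : V, α * ‖v‖ ^ 2 ≤ ⟪B v, v⟫)
    (T : H →L[ℝ] V) (hT : Function.Surjective T)
    (G : H →L[ℝ] H) (hG : G = (ContinuousLinearMap.adjoint T).comp (B.comp T))
    (c : ℝ) (hc : 0 < c) (hcG : ∀ x ∈ (LinearMap.ker (T : H →ₗ[ℝ] V))ᗮ, c * ‖x‖ ≤ ‖G x‖)
    (A₁ : V →L[ℝ] V →L[ℝ] V) (hA₁ : ‖A₁‖ ≠ 0)
    (G₁ : H → H) (hG₁ : ∀ x : H, G₁ x = ContinuousLinearMap.adjoint T (A₁ (T x) (T x)))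
    (lbar : H) (hlbar : lbar ∈ LinearMap.range (ContinuousLinearMap.adjoint T : V →ₗ[ℝ] H))
    (r : ℝ) (hr : 0 < r) (hr' : r < c / (2 * ‖T‖ ^ 3 * ‖A₁‖)) :
    2 * r * ‖T‖ ^ 3 * ‖A₁‖ / c < 1 ∧
    ∀ u v hu hv : H,
      u ∈ (LinearMap.ker (T : H →ₗ[ℝ] V))ᗮ → v ∈ (LinearMap.ker (T : H →ₗ[ℝ] V))ᗮ →
      ‖u‖ ≤ r → ‖v‖ ≤ r →
      hu ∈ (LinearMap.ker (T : H →ₗ[ℝ] V))ᗮ → hv ∈ (LinearMap.ker (T : H →ₗ[ℝ] V))ᗮ →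
      G hu = lbar - G₁ u → G hv = lbar - G₁ v →
      ‖hu - hv‖ ≤ (2 * r * ‖T‖ ^ 3 * ‖A₁‖ / c) * ‖u - v‖ := by
  have hA₁pos : 0 < ‖A₁‖ := lt_of_le_of_ne (norm_nonneg A₁) (Ne.symm hA₁)
  have hTpos : 0 < ‖T‖ := by
    rcases (norm_nonneg T).lt_or_eq with h | h
    · exact h
    · exfalso
      rw [← h] at hr'
      simp at hr'
      linarith
  have hK : 0 < 2 * ‖T‖ ^ 3 * ‖A₁‖ := by positivity
  have hrc : 2 * r * ‖T‖ ^ 3 * ‖A₁‖ < c := by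
    have := (lt_div_iff₀ hK).1 hr'
    nlinarith
  constructor
  · exact (div_lt_one hc).2 hrc
  · intro u v hu hv humem hvmem hur hvr humem' hvmem' hGu hGv
    have hGsub : G (hu - hv) =
        ContinuousLinearMap.adjoint T
          (A₁ (T v) (T v) - A₁ (T u) (T u)) := by
      rw [map_sub, hGu, hGv, hG₁, hG₁, map_sub]
      abel
    have hdiff : A₁ (T v) (T v) - A₁ (T u) (T u)
        = A₁ (T v - T u) (T v) + A₁ (T u) (T v - T u) := by
      simp [map_sub, ContinuousLinearMap.sub_apply]
    have hnormadj : ‖(ContinuousLinearMap.adjoint T :)‖ = ‖T‖ :=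
      LinearIsometryEquiv.norm_map ContinuousLinearMap.adjoint T
    have hTle : ∀ x : H, ‖T x‖ ≤ ‖T‖ * ‖x‖ := fun x => T.le_opNorm x
    have hbil : ∀ x y : V, ‖A₁ x y‖ ≤ ‖A₁‖ * ‖x‖ * ‖y‖ := fun x y =>
      (A₁ x).le_opNorm y |>.trans (by
        have := A₁.le_opNorm x
        have := norm_nonneg y
        nlinarith [norm_nonneg (A₁ x), norm_nonneg x])
    have hTvu : ‖T v - T u‖ ≤ ‖T‖ * ‖u - v‖ := by
      rw [← map_sub, ← norm_neg, ← map_neg]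
      simpa [neg_sub] using hTle (u - v)
    have hTu : ‖T u‖ ≤ ‖T‖ * r :=
      (hTle u).trans (by nlinarith)
    have hTv : ‖T v‖ ≤ ‖T‖ * r :=
      (hTle v).trans (by nlinarith)
    have hdnorm : ‖A₁ (T v) (T v) - A₁ (T u) (T u)‖
        ≤ 2 * r * ‖T‖ ^ 2 * ‖A₁‖ * ‖u - v‖ := by
      rw [hdiff]
      calc ‖A₁ (T v - T u) (T v) + A₁ (T u) (T v - T u)‖
          ≤ ‖A₁ (T v - T u) (T v)‖ + ‖A₁ (T u) (T v - T u)‖ := norm_add_le _ _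
        _ ≤ ‖A₁‖ * ‖T v - T u‖ * ‖T v‖ + ‖A₁‖ * ‖T u‖ * ‖T v - T u‖ :=
            add_le_add (hbil _ _) (hbil _ _)
        _ ≤ ‖A₁‖ * (‖T‖ * ‖u - v‖) * (‖T‖ * r) + ‖A₁‖ * (‖T‖ * r) * (‖T‖ * ‖u - v‖) := by
            gcongr
        _ = 2 * r * ‖T‖ ^ 2 * ‖A₁‖ * ‖u - v‖ := by ring
    have hmain : c * ‖hu - hv‖ ≤ 2 * r * ‖T‖ ^ 3 * ‖A₁‖ * ‖u - v‖ := by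
      have h1 := hcG (hu - hv) (Submodule.sub_mem _ humem' hvmem')
      rw [hGsub] at h1
      have h2 : ‖(ContinuousLinearMap.adjoint T)
          (A₁ (T v) (T v) - A₁ (T u) (T u))‖
          ≤ ‖T‖ * ‖A₁ (T v) (T v) - A₁ (T u) (T u)‖ := by
        have := (ContinuousLinearMap.adjoint T).le_opNorm
          (A₁ (T v) (T v) - A₁ (T u) (T u))
        rwa [hnormadj] at this
      calc c * ‖hu - hv‖ ≤ ‖(ContinuousLinearMap.adjoint T)
            (A₁ (T v) (T v) - A₁ (T u) (T u))‖ := h1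
        _ ≤ ‖T‖ * ‖A₁ (T v) (T v) - A₁ (T u) (T u)‖ := h2
        _ ≤ ‖T‖ * (2 * r * ‖T‖ ^ 2 * ‖A₁‖ * ‖u - v‖) :=
            mul_le_mul_of_nonneg_left hdnorm (norm_nonneg T)
        _ = 2 * r * ‖T‖ ^ 3 * ‖A₁‖ * ‖u - v‖ := by ring
    rw [div_mul_eq_mul_div, le_div_iff₀ hc, mul_comm]
    exact hmain
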